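/- arXiv:2301.12011 — 2 statements merged into one kernel-verified Lean document; each statement's English description precedes it below -/
import Mathlib

section
/- The reconstruction error of gappy POD is controlled by the inverse of the smallest singular value of C U_r: for any x ∈ ℝᵐ, ‖x − U_r (C U_r)⁻¹ C x‖₂ ≤ (1 + ‖(C U_r)⁻¹‖₂ ‖C‖₂) · ‖x − U_r U_rᵀ x‖₂, where ‖·‖₂ denotes the spectral (operator) norm. -/
open Matrix BigOperators

/-- Euclidean norm of a vector. -/
noncomputable def euclNorm {k : ℕ} (v : Fin k → ℝ) : ℝ :=
  Real.sqrt (∑ i, v i ^ 2)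

/-- Spectral (operator) norm of a matrix, with respect to Euclidean norms. -/
noncomputable def opNorm {a b : ℕ} (M : Matrix (Fin a) (Fin b) ℝ) : ℝ :=
  sSup {c : ℝ | ∃ x : Fin b → ℝ, euclNorm x ≤ 1 ∧ c = euclNorm (M *ᵥ x)}

noncomputable def matCLM {a b : ℕ} (M : Matrix (Fin a) (Fin b) ℝ) :
    EuclideanSpace ℝ (Fin b) →L[ℝ] EuclideanSpace ℝ (Fin a) :=
  LinearMap.toContinuousLinearMap (Matrix.toEuclideanLin M)

lemma euclNorm_eq {k : ℕ} (v : Fin k → ℝ) :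
    euclNorm v = ‖(WithLp.equiv 2 (Fin k → ℝ)).symm v‖ := by
  rw [EuclideanSpace.norm_eq]
  simp [euclNorm, Real.norm_eq_abs, sq_abs]

lemma matCLM_apply {a b : ℕ} (M : Matrix (Fin a) (Fin b) ℝ)
    (y : EuclideanSpace ℝ (Fin b)) :
    matCLM M y = (WithLp.equiv 2 (Fin a → ℝ)).symm (M *ᵥ (WithLp.equiv 2 (Fin b → ℝ)) y) :=
  rfl

lemma opNorm_eq {a b : ℕ} (M : Matrix (Fin a) (Fin b) ℝ) :
    opNorm M = ‖matCLM M‖ := by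
  rw [← ContinuousLinearMap.sSup_unitClosedBall_eq_norm (matCLM M)]
  refine congrArg sSup (Set.ext fun c => ?_)
  constructor
  · rintro ⟨x, hx, rfl⟩
    refine ⟨(WithLp.equiv 2 (Fin b → ℝ)).symm x, ?_, ?_⟩
    · rwa [Metric.mem_closedBall, dist_zero_right, ← euclNorm_eq]
    · show ‖matCLM M _‖ = _
      rw [matCLM_apply, euclNorm_eq]
      simp
  · rintro ⟨y, hy, rfl⟩
    refine ⟨(WithLp.equiv 2 (Fin b → ℝ)) y, ?_, ?_⟩
    · rw [euclNorm_eq]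
      simpa [Metric.mem_closedBall, dist_zero_right] using hy
    · show ‖matCLM M _‖ = _
      rw [matCLM_apply, euclNorm_eq]

lemma euclNorm_mulVec_le {a b : ℕ} (M : Matrix (Fin a) (Fin b) ℝ) (v : Fin b → ℝ) :
    euclNorm (M *ᵥ v) ≤ opNorm M * euclNorm v := by
  rw [opNorm_eq, euclNorm_eq, euclNorm_eq]
  have := (matCLM M).le_opNorm ((WithLp.equiv 2 (Fin b → ℝ)).symm v)
  simpa [matCLM_apply] using this

lemma opNorm_nonneg' {a b : ℕ} (M : Matrix (Fin a) (Fin b) ℝ) : 0 ≤ opNorm M := by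
  rw [opNorm_eq]; exact norm_nonneg _

lemma euclNorm_sub_le {k : ℕ} (v w : Fin k → ℝ) :
    euclNorm (v - w) ≤ euclNorm v + euclNorm w := by
  rw [euclNorm_eq, euclNorm_eq, euclNorm_eq, WithLp.equiv_symm_apply, WithLp.toLp_sub]
  exact norm_sub_le _ _

lemma euclNorm_mulVec_orth {m r : ℕ} (U : Matrix (Fin m) (Fin r) ℝ)
    (hU : Uᵀ * U = 1) (v : Fin r → ℝ) : euclNorm (U *ᵥ v) = euclNorm v := by
  unfold euclNorm
  congr 1
  have h : (U *ᵥ v) ⬝ᵥ (U *ᵥ v) = v ⬝ᵥ v := by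
    rw [Matrix.dotProduct_mulVec, ← Matrix.vecMul_transpose, Matrix.vecMul_vecMul, hU,
      Matrix.vecMul_one]
  simpa [dotProduct, pow_two] using h

theorem gappy_pod_error_bound {m r : ℕ}
    (U : Matrix (Fin m) (Fin r) ℝ) (C : Matrix (Fin r) (Fin m) ℝ)
    (hU : Uᵀ * U = 1)
    (f : Fin r → Fin m) (hf : Function.Injective f)
    (hC : ∀ i j, C i j = if f i = j then 1 else 0)
    (hinv : IsUnit (C * U).det)
    (x : Fin m → ℝ) :
    euclNorm (x - U *ᵥ ((C * U)⁻¹ *ᵥ (C *ᵥ x))) ≤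
      (1 + opNorm (C * U)⁻¹ * opNorm C) * euclNorm (x - U *ᵥ (Uᵀ *ᵥ x)) := by
  set A := (C * U)⁻¹ with hA
  set y := x - U *ᵥ (Uᵀ *ᵥ x) with hy
  have hAinv : A * (C * U) = 1 := Matrix.nonsing_inv_mul _ hinv
  have hfix : U *ᵥ (A *ᵥ (C *ᵥ (U *ᵥ (Uᵀ *ᵥ x)))) = U *ᵥ (Uᵀ *ᵥ x) := by
    rw [Matrix.mulVec_mulVec (Uᵀ *ᵥ x) C U, Matrix.mulVec_mulVec (Uᵀ *ᵥ x) A (C * U), hAinv,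
      Matrix.one_mulVec]
  have key : x - U *ᵥ (A *ᵥ (C *ᵥ x)) = y - U *ᵥ (A *ᵥ (C *ᵥ y)) := by
    rw [hy]
    rw [Matrix.mulVec_sub C, Matrix.mulVec_sub A, Matrix.mulVec_sub U, hfix]
    abel
  rw [key]
  calc euclNorm (y - U *ᵥ (A *ᵥ (C *ᵥ y)))
      ≤ euclNorm y + euclNorm (U *ᵥ (A *ᵥ (C *ᵥ y))) := euclNorm_sub_le _ _
    _ = euclNorm y + euclNorm (A *ᵥ (C *ᵥ y)) := by
        rw [euclNorm_mulVec_orth U hU]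
    _ ≤ euclNorm y + opNorm A * euclNorm (C *ᵥ y) := by
        gcongr
        exact euclNorm_mulVec_le _ _
    _ ≤ euclNorm y + opNorm A * (opNorm C * euclNorm y) := by
        gcongr
        · exact opNorm_nonneg' _
        · exact euclNorm_mulVec_le _ _
    _ = (1 + opNorm A * opNorm C) * euclNorm y := by ring
end

section
/- Hadamard's determinant inequality: for any real n×n matrix A with columns a₁,…,aₙ, |det A| ≤ ∏ᵢ ‖aᵢ‖₂, with equality when the columns are pairwise orthogonal. -/
open Matrix BigOperators

/-- Hadamard's determinant inequality, with equality for pairwise orthogonal columns. -/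
theorem hadamard_inequality {n : ℕ} (A : Matrix (Fin n) (Fin n) ℝ) :
    |A.det| ≤ ∏ i, euclNorm (fun k => A k i) ∧
      ((∀ i j, i ≠ j → ∑ k, A k i * A k j = 0) →
        |A.det| = ∏ i, euclNorm (fun k => A k i)) := by
  classical
  haveI : Fact (Module.finrank ℝ (EuclideanSpace ℝ (Fin n)) = n) :=
    ⟨by simp⟩
  set E := EuclideanSpace ℝ (Fin n)
  let b : OrthonormalBasis (Fin n) ℝ E := EuclideanSpace.basisFun (Fin n) ℝ
  let o : Orientation ℝ E (Fin n) := b.toBasis.orientation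
  let v : Fin n → E := fun i => (WithLp.equiv 2 _).symm (fun k => A k i)
  have hdet : b.toBasis.det v = A.det := by
    rw [Module.Basis.det_apply]
    congr 1
  have hnorm : ∀ i, ‖v i‖ = euclNorm (fun k => A k i) := by
    intro i
    rw [EuclideanSpace.norm_eq, euclNorm]
    congr 1
    refine Finset.sum_congr rfl fun k _ => ?_
    simp [v, sq_abs]
  have habs : |A.det| = |o.volumeForm v| := by
    rw [o.volumeForm_robust' b v, hdet]
  constructor
  · rw [habs]
    calc |o.volumeForm v| ≤ ∏ i, ‖v i‖ := o.abs_volumeForm_apply_le v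
      _ = ∏ i, euclNorm (fun k => A k i) := by
          exact Finset.prod_congr rfl fun i _ => hnorm i
  · intro horth
    have hv : Pairwise fun i j => (inner ℝ (v i) (v j) : ℝ) = 0 := by
      intro i j hij
      have := horth i j hij
      simpa [v, PiLp.inner_apply, E, mul_comm] using this
    rw [habs, o.abs_volumeForm_apply_of_pairwise_orthogonal hv]
    exact Finset.prod_congr rfl fun i _ => hnorm i
end
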